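/- Let a, b > 0 be real numbers and 0 < t, τ < 1. If t ≤ min{τ, 1-τ} or t ≥ max{τ, 1-τ}, then !_t(a,b) · ((a ∇ b)/!_τ(a,b))^{t(1-t)/(τ(1-τ))} ≤ a ∇ b. If instead min{τ, 1-τ} ≤ t ≤ max{τ, 1-τ}, the reverse inequality holds. -/

import Mathlib

/-- The weighted harmonic mean of positive reals: `a !_t b = ((1-t)a⁻¹ + t b⁻¹)⁻¹`. -/
noncomputable def wharm (t a b : ℝ) : ℝ := ((1 - t) * a⁻¹ + t * b⁻¹)⁻¹

/-- The harmonic Heinz mean `!_t(a,b) = (a !_t b + a !_{1-t} b)/2`. -/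
noncomputable def heinzHarm (t a b : ℝ) : ℝ := (wharm t a b + wharm (1 - t) a b) / 2

lemma wharm_eq (a b t : ℝ) (ha : 0 < a) (hb : 0 < b) (ht0 : 0 < t) (ht1 : t < 1) :
    wharm t a b = a * b / (t * a + (1 - t) * b) := by
  have h1t : 0 < 1 - t := by linarith
  have hd : 0 < t * a + (1 - t) * b := by positivity
  unfold wharm
  rw [show (1 - t) * a⁻¹ + t * b⁻¹ = (t * a + (1 - t) * b) / (a * b) by
    field_simp; ring, inv_div]

lemma heinz_eq (a b t : ℝ) (ha : 0 < a) (hb : 0 < b) (ht0 : 0 < t) (ht1 : t < 1) :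
    heinzHarm t a b * (1 + t * (1 - t) * ((a - b) ^ 2 / (a * b))) = (a + b) / 2 := by
  have h1t : 0 < 1 - t := by linarith
  have hd1 : 0 < t * a + (1 - t) * b := by positivity
  have hd2 : 0 < (1 - t) * a + (1 - (1 - t)) * b := by nlinarith
  rw [heinzHarm, wharm_eq a b t ha hb ht0 ht1,
    wharm_eq a b (1 - t) ha hb h1t (by linarith)]
  rw [sub_sub_cancel]
  have hd3 : (1 - t) * a + t * b ≠ 0 := ne_of_gt (by nlinarith)
  field_simp
  ring

lemma heinz_pos (a b t : ℝ) (ha : 0 < a) (hb : 0 < b) (ht0 : 0 < t) (ht1 : t < 1) :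
    0 < heinzHarm t a b := by
  have h1t : 0 < 1 - t := by linarith
  have hd1 : 0 < t * a + (1 - t) * b := by positivity
  have hd2 : 0 < (1 - t) * a + (1 - (1 - t)) * b := by nlinarith
  rw [heinzHarm, wharm_eq a b t ha hb ht0 ht1,
    wharm_eq a b (1 - t) ha hb h1t (by linarith)]
  positivity

theorem stmt_5 (a b t τ : ℝ) (ha : 0 < a) (hb : 0 < b)
    (ht : t ∈ Set.Ioo (0 : ℝ) 1) (hτ : τ ∈ Set.Ioo (0 : ℝ) 1) :
    ((t ≤ min τ (1 - τ) ∨ t ≥ max τ (1 - τ)) →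
      heinzHarm t a b * (((a + b) / 2) / heinzHarm τ a b) ^ (t * (1 - t) / (τ * (1 - τ)))
        ≤ (a + b) / 2) ∧
    ((min τ (1 - τ) ≤ t ∧ t ≤ max τ (1 - τ)) →
      (a + b) / 2
        ≤ heinzHarm t a b * (((a + b) / 2) / heinzHarm τ a b) ^ (t * (1 - t) / (τ * (1 - τ)))) := by
  obtain ⟨ht0, ht1⟩ := ht
  obtain ⟨hτ0, hτ1⟩ := hτ
  have hx0 : (0:ℝ) ≤ (a - b) ^ 2 / (a * b) := by positivity
  set x : ℝ := (a - b) ^ 2 / (a * b) with hx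
  set u : ℝ := t * (1 - t) with hu
  set s : ℝ := τ * (1 - τ) with hs
  have hu0 : 0 < u := by rw [hu]; nlinarith
  have hs0 : 0 < s := by rw [hs]; nlinarith
  have hHt : heinzHarm t a b * (1 + u * x) = (a + b) / 2 := by
    rw [hu, hx]; exact heinz_eq a b t ha hb ht0 ht1
  have hHτ : heinzHarm τ a b * (1 + s * x) = (a + b) / 2 := by
    rw [hs, hx]; exact heinz_eq a b τ ha hb hτ0 hτ1
  have hHtp := heinz_pos a b t ha hb ht0 ht1
  have hHτp := heinz_pos a b τ ha hb hτ0 hτ1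
  have hsxpos : 0 < 1 + s * x := by positivity
  have hratio : ((a + b) / 2) / heinzHarm τ a b = 1 + s * x := by
    rw [← hHτ, mul_comm, mul_div_assoc, div_self hHτp.ne', mul_one]
  have husx : 1 + u * x = 1 + (u / s) * (s * x) := by
    field_simp
  have hr0 : 0 ≤ u / s := by positivity
  have hsx : (-1 : ℝ) ≤ s * x := by nlinarith
  constructor
  · intro hcase
    have hus : u ≤ s := by
      rw [hu, hs]
      rcases hcase with h | h
      · have h1 : t ≤ τ := le_trans h (min_le_left _ _)
        have h2 : t ≤ 1 - τ := le_trans h (min_le_right _ _)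
        nlinarith
      · have h1 : τ ≤ t := le_trans (le_max_left _ _) h
        have h2 : 1 - τ ≤ t := le_trans (le_max_right _ _) h
        nlinarith
    have hber : (1 + s * x) ^ (u / s) ≤ 1 + u * x := by
      rw [husx]
      exact rpow_one_add_le_one_add_mul_self hsx hr0 ((div_le_one hs0).mpr hus)
    rw [hratio, ← hHt]
    exact mul_le_mul_of_nonneg_left hber hHtp.le
  · intro ⟨h1, h2⟩
    have hsu : s ≤ u := by
      rw [hu, hs]
      rcases le_total τ (1 - τ) with hc | hc
      · rw [min_eq_left hc] at h1; rw [max_eq_right hc] at h2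
        nlinarith
      · rw [min_eq_right hc] at h1; rw [max_eq_left hc] at h2
        nlinarith
    have hber : 1 + u * x ≤ (1 + s * x) ^ (u / s) := by
      rw [husx]
      exact one_add_mul_self_le_rpow_one_add hsx ((one_le_div hs0).mpr hsu)
    rw [hratio, ← hHt]
    exact mul_le_mul_of_nonneg_left hber hHtp.le
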